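/- Let OPT ≥ 0 and k ≥ 1, and let a sequence of nonnegative reals a₀, a₁, …, a_k satisfy a₀ = 0 and a_{i+1} ≥ a_i + (OPT − σ a_i)/k for all 0 ≤ i < k, where 0 < σ ≤ 1. Then a_k ≥ (1/σ)(1 − (1 − σ/k)^k)·OPT. -/

import Mathlib

/-- If nonnegative reals `a₀,…,a_k` satisfy `a₀ = 0` and
`a_{i+1} ≥ a_i + (OPT − σ a_i)/k` for `0 ≤ i < k`, where `OPT ≥ 0`, `k ≥ 1`,
`0 < σ ≤ 1`, then `a_k ≥ (1/σ)(1 − (1 − σ/k)^k)·OPT`. -/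
theorem greedy_recurrence_curvature (OPT σ : ℝ) (hOPT : 0 ≤ OPT)
    (hσ0 : 0 < σ) (hσ1 : σ ≤ 1) (k : ℕ) (hk : 1 ≤ k)
    (a : ℕ → ℝ) (ha0 : a 0 = 0) (hnonneg : ∀ i ≤ k, 0 ≤ a i)
    (hstep : ∀ i < k, a i + (OPT - σ * a i) / k ≤ a (i + 1)) :
    (1 / σ) * (1 - (1 - σ / k) ^ k) * OPT ≤ a k := by
  have hk0 : (0:ℝ) < k := by exact_mod_cast Nat.lt_of_lt_of_le Nat.zero_lt_one hk
  have hc : 0 ≤ 1 - σ / k := by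
    have : σ / k ≤ 1 := by
      rw [div_le_one hk0]
      calc σ ≤ 1 := hσ1
        _ ≤ (k:ℝ) := by exact_mod_cast hk
    linarith
  have key : ∀ i ≤ k, (1 / σ) * (1 - (1 - σ / k) ^ i) * OPT ≤ a i := by
    intro i hi
    induction i with
    | zero => simp [ha0]
    | succ n ih =>
      have hn : n < k := hi
      have ihn := ih (le_of_lt hn)
      have hs := hstep n hn
      have heq : a n + (OPT - σ * a n) / k = (1 - σ / k) * a n + OPT / k := by
        field_simp; ring
      have hmono : (1 - σ / k) * ((1 / σ) * (1 - (1 - σ / k) ^ n) * OPT)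
          ≤ (1 - σ / k) * a n := mul_le_mul_of_nonneg_left ihn hc
      have hid : (1 - σ / k) * ((1 / σ) * (1 - (1 - σ / k) ^ n) * OPT) + OPT / k
          = (1 / σ) * (1 - (1 - σ / k) ^ (n + 1)) * OPT := by
        rw [pow_succ]; field_simp; ring
      calc (1 / σ) * (1 - (1 - σ / k) ^ (n + 1)) * OPT
          = (1 - σ / k) * ((1 / σ) * (1 - (1 - σ / k) ^ n) * OPT) + OPT / k := hid.symm
        _ ≤ (1 - σ / k) * a n + OPT / k := by linarith
        _ = a n + (OPT - σ * a n) / k := heq.symm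
        _ ≤ a (n + 1) := hs
  exact key k le_rfl
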